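/- Let 𝒜 be a nonempty set of polynomials and {T_k : X_k → X_k} a uniformly bounded sequence of bounded linear operators on Banach spaces such that for every n ≥ 1 the finite direct sum S_n = T_1 ⊕ ⋯ ⊕ T_n has a dense set of 𝒜-cyclic vectors on X_1 ⊕ ⋯ ⊕ X_n. Then the infinite direct sum T = ⊕_{k=1}^∞ T_k on the ℓ²-direct sum ⊕_{k=1}^∞ X_k has a dense set of 𝒜-cyclic vectors. -/

import Mathlib

open Polynomial Metric Filter TopologicalSpace ENNReal Topology

section Aux

variable {𝕜 : Type*} [RCLike 𝕜]

/-- Generic intertwining of the polynomial functional calculus along an additive,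
homogeneous map. -/
lemma aeval_comm_map {E F : Type*} [NormedAddCommGroup E]
    [NormedSpace 𝕜 E] [NormedAddCommGroup F] [NormedSpace 𝕜 F]
    (U : E →L[𝕜] E) (V : F →L[𝕜] F) (φ : E → F)
    (hadd : ∀ a b, φ (a + b) = φ a + φ b)
    (hsmul : ∀ (c : 𝕜) a, φ (c • a) = c • φ a)
    (hcomm : ∀ a, φ (U a) = V (φ a)) (p : Polynomial 𝕜) (x : E) :
    φ (aeval U p x) = aeval V p (φ x) := by
  have hpow : ∀ (m : ℕ) (a : E), φ ((U ^ m) a) = (V ^ m) (φ a) := by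
    intro m
    induction m with
    | zero => intro a; simp
    | succ m ih =>
      intro a
      rw [pow_succ, pow_succ, ContinuousLinearMap.mul_apply, ContinuousLinearMap.mul_apply,
        ih, hcomm]
  induction p using Polynomial.induction_on' with
  | add p q hp hq =>
    rw [map_add, ContinuousLinearMap.add_apply, hadd, hp, hq, map_add,
      ContinuousLinearMap.add_apply]
  | monomial n a =>
    rw [aeval_monomial, aeval_monomial, ContinuousLinearMap.mul_apply,
      ContinuousLinearMap.mul_apply, Algebra.algebraMap_eq_smul_one,
      Algebra.algebraMap_eq_smul_one, ContinuousLinearMap.smul_apply,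
      ContinuousLinearMap.smul_apply, ContinuousLinearMap.one_apply,
      ContinuousLinearMap.one_apply, hsmul, hpow]

variable {X : ℕ → Type*} [∀ k, NormedAddCommGroup (X k)]

/-- Extension by zero of a finite tuple, as an element of the `ℓ²` direct sum. -/
noncomputable def Jmap (n : ℕ) (v : PiLp 2 fun i : Fin n => X i) : lp X 2 :=
  ∑ i : Fin n, lp.single 2 (i : ℕ) (v i)

lemma Jmap_apply (n : ℕ) (v : PiLp 2 fun i : Fin n => X i) (k : ℕ) :
    (Jmap n v : ∀ k, X k) k = if h : k < n then v ⟨k, h⟩ else 0 := by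
  rw [Jmap, lp.coeFn_sum, Finset.sum_apply]
  by_cases h : k < n
  · rw [dif_pos h, Finset.sum_eq_single (⟨k, h⟩ : Fin n)]
    · exact lp.single_apply_self 2 (k : ℕ) _
    · intro i _ hne
      refine lp.single_apply_ne 2 (i : ℕ) _ (fun hk => hne ?_)
      exact Fin.ext (by simp [← hk])
    · simp
  · rw [dif_neg h]
    refine Finset.sum_eq_zero fun i _ => ?_
    exact lp.single_apply_ne 2 (i : ℕ) _ (by omega)

lemma Jmap_add (n : ℕ) (v w : PiLp 2 fun i : Fin n => X i) :
    Jmap n (v + w) = Jmap n v + Jmap n w := by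
  apply lp.ext; funext k
  rw [lp.coeFn_add, Pi.add_apply, Jmap_apply, Jmap_apply, Jmap_apply]
  by_cases h : k < n
  · simp [h]
  · simp [h]

lemma Jmap_sub (n : ℕ) (v w : PiLp 2 fun i : Fin n => X i) :
    Jmap n (v - w) = Jmap n v - Jmap n w := by
  apply lp.ext; funext k
  rw [lp.coeFn_sub, Pi.sub_apply, Jmap_apply, Jmap_apply, Jmap_apply]
  by_cases h : k < n
  · simp [h]
  · simp [h]

lemma Jmap_smul [∀ k, NormedSpace 𝕜 (X k)] (n : ℕ) (c : 𝕜) (v : PiLp 2 fun i : Fin n => X i) :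
    Jmap n (c • v) = c • Jmap n v := by
  apply lp.ext; funext k
  rw [lp.coeFn_smul, Pi.smul_apply, Jmap_apply, Jmap_apply]
  by_cases h : k < n
  · simp [h]
  · simp [h]

lemma coord_norm_le (n : ℕ) (v : PiLp 2 fun i : Fin n => X i) (i : Fin n) : ‖v i‖ ≤ ‖v‖ := by
  have h1 : ‖v i‖ ^ 2 ≤ ‖v‖ ^ 2 := by
    rw [PiLp.norm_sq_eq_of_L2]
    exact Finset.single_le_sum (f := fun j => ‖v j‖ ^ 2) (fun j _ => by positivity)
      (Finset.mem_univ i)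
  nlinarith [norm_nonneg (v i), norm_nonneg v]

lemma Jmap_norm_le (n : ℕ) (v : PiLp 2 fun i : Fin n => X i) : ‖Jmap n v‖ ≤ n * ‖v‖ := by
  have hp : 0 < (2 : ℝ≥0∞).toReal := by norm_num
  calc ‖Jmap n v‖ ≤ ∑ i : Fin n, ‖lp.single 2 (i : ℕ) (v i)‖ := norm_sum_le _ _
    _ ≤ ∑ i : Fin n, ‖v‖ := by
        refine Finset.sum_le_sum fun i _ => ?_
        have hf : (Jmap n v : ∀ k, X k) (i : ℕ) = v i := by
          rw [Jmap_apply]; simp [i.isLt]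
        have := lp.norm_single (p := 2) (by norm_num) (i : ℕ) ((Jmap n v : ∀ k, X k) (i : ℕ))
        rw [hf] at this
        rw [this]
        exact coord_norm_le n v i
    _ = n * ‖v‖ := by simp [Finset.sum_const, nsmul_eq_mul]

lemma Jmap_dist_le (n : ℕ) (a b : PiLp 2 fun i : Fin n => X i) :
    dist (Jmap n a) (Jmap n b) ≤ n * dist a b := by
  rw [dist_eq_norm, dist_eq_norm, ← Jmap_sub]
  exact Jmap_norm_le n (a - b)

lemma Jmap_continuous (n : ℕ) : Continuous (Jmap (X := X) n) :=
  (LipschitzWith.of_dist_le_mul (K := n) fun a b => by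
    simpa using Jmap_dist_le n a b).continuous

lemma tendsto_Jmap_trunc (x : lp X 2) :
    Tendsto (fun n => Jmap (X := X) n (WithLp.toLp 2 (fun i : Fin n => x i))) atTop (𝓝 x) := by
  have h := (lp.hasSum_single (E := X) (p := 2) (by norm_num) x).tendsto_sum_nat
  convert h using 2 with n
  rw [Jmap, ← Fin.sum_univ_eq_sum_range (fun i => lp.single 2 i (x i)) n]

variable [∀ k, NormedSpace 𝕜 (X k)]

/-- The block-diagonal operator on a finite `PiLp` direct sum. -/
noncomputable def finOp (T : ∀ k, X k →L[𝕜] X k) (n : ℕ) :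
    (PiLp 2 fun i : Fin n => X i) →L[𝕜] PiLp 2 fun i : Fin n => X i :=
  (((PiLp.continuousLinearEquiv 2 𝕜 fun i : Fin n => X i).symm.toContinuousLinearMap).comp
    (ContinuousLinearMap.pi fun i : Fin n =>
      (T i).comp (ContinuousLinearMap.proj i))).comp
    (PiLp.continuousLinearEquiv 2 𝕜 fun i : Fin n => X i).toContinuousLinearMap

lemma finOp_apply (T : ∀ k, X k →L[𝕜] X k) (n : ℕ) (v : PiLp 2 fun i : Fin n => X i)
    (i : Fin n) : finOp T n v i = T i (v i) := rfl

lemma S_Jmap (T : ∀ k, X k →L[𝕜] X k) (S : lp X 2 →L[𝕜] lp X 2)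
    (hS : ∀ (x : lp X 2) (k : ℕ), (S x : ∀ k, X k) k = T k (x k)) (n : ℕ)
    (v : PiLp 2 fun i : Fin n => X i) : S (Jmap n v) = Jmap n (finOp T n v) := by
  apply lp.ext; funext k
  rw [hS, Jmap_apply, Jmap_apply]
  by_cases h : k < n
  · simp [h, finOp_apply]
  · simp [h]

lemma separable_of_denseCyclic {E : Type*} [NormedAddCommGroup E] [NormedSpace 𝕜 E]
    (U : E →L[𝕜] E) (𝒜 : Set (Polynomial 𝕜))
    (h : Dense {x : E | Dense ((fun p : Polynomial 𝕜 => aeval U p x) '' 𝒜)}) :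
    SeparableSpace E := by
  obtain ⟨x₀, hx₀⟩ := h.nonempty
  have hsub : ((fun p : Polynomial 𝕜 => aeval U p x₀) '' 𝒜) ⊆
      ↑(Submodule.span 𝕜 (Set.range fun m : ℕ => (U ^ m) x₀)) := by
    rintro z ⟨p, _, rfl⟩
    have h1 : aeval U p x₀ = ∑ i ∈ Finset.range (p.natDegree + 1), p.coeff i • (U ^ i) x₀ := by
      rw [aeval_eq_sum_range]
      simp
    show aeval U p x₀ ∈ Submodule.span 𝕜 (Set.range fun m : ℕ => (U ^ m) x₀)
    rw [h1]
    exact Submodule.sum_mem _ fun i _ => Submodule.smul_mem _ _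
      (Submodule.subset_span ⟨i, rfl⟩)
  have hd : Dense (↑(Submodule.span 𝕜 (Set.range fun m : ℕ => (U ^ m) x₀)) : Set E) :=
    hx₀.mono hsub
  exact hd.isSeparable_iff.mp ((Set.countable_range _).isSeparable.span)

end Aux

theorem direct_sum_A_cyclic
    {𝕜 : Type*} [RCLike 𝕜] {X : ℕ → Type*} [∀ k, NormedAddCommGroup (X k)]
    [∀ k, NormedSpace 𝕜 (X k)] [∀ k, CompleteSpace (X k)]
    (𝒜 : Set (Polynomial 𝕜)) (h𝒜 : 𝒜.Nonempty)
    (T : ∀ k, X k →L[𝕜] X k) (C : ℝ) (hC : ∀ k, ‖T k‖ ≤ C)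
    (hfin : ∀ (n : ℕ), 1 ≤ n →
      ∀ Sn : PiLp 2 (fun i : Fin n => X i) →L[𝕜] PiLp 2 (fun i : Fin n => X i),
        (∀ (x : PiLp 2 (fun i : Fin n => X i)) (i : Fin n), Sn x i = T i (x i)) →
        Dense {x : PiLp 2 (fun i : Fin n => X i) |
          Dense ((fun p : Polynomial 𝕜 => (Polynomial.aeval Sn p) x) '' 𝒜)})
    (S : lp X 2 →L[𝕜] lp X 2) (hS : ∀ (x : lp X 2) (k : ℕ), (S x : ∀ k, X k) k = T k (x k)) :
    Dense {x : lp X 2 | Dense ((fun p : Polynomial 𝕜 => (Polynomial.aeval S p) x) '' 𝒜)} := by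
  classical
  -- intertwining of the functional calculus with the inclusion `Jmap n`
  have hJae : ∀ (n : ℕ) (p : Polynomial 𝕜) (v : PiLp 2 fun i : Fin n => X i),
      aeval S p (Jmap n v) = Jmap n (aeval (finOp T n) p v) := fun n p v =>
    (aeval_comm_map (finOp T n) S (Jmap n) (Jmap_add n) (Jmap_smul n)
      (fun a => (S_Jmap T S hS n a).symm) p v).symm
  -- separability
  haveI hsepE : SeparableSpace (lp X 2) := by
    have hsub : IsSeparable (⋃ n : ℕ, Set.range (Jmap (X := X) n)) := by
      refine IsSeparable.iUnion fun n => ?_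
      match n with
      | 0 =>
        refine ((Set.countable_singleton (0 : lp X 2)).isSeparable).mono ?_
        rintro _ ⟨v, rfl⟩
        simp [Jmap]
      | (m + 1) =>
        haveI : SeparableSpace (PiLp 2 fun i : Fin (m + 1) => X i) :=
          separable_of_denseCyclic (finOp T (m + 1)) 𝒜
            (hfin (m + 1) (Nat.le_add_left 1 m) (finOp T (m + 1)) fun v i => rfl)
        exact isSeparable_range (Jmap_continuous (m + 1))
    have hdense : Dense (⋃ n : ℕ, Set.range (Jmap (X := X) n)) := by
      intro x
      refine mem_closure_of_tendsto (tendsto_Jmap_trunc x) ?_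
      exact Eventually.of_forall fun n => Set.mem_iUnion.mpr ⟨n, ⟨_, rfl⟩⟩
    exact hdense.isSeparable_iff.mp hsub
  -- the key density lemma
  have key : ∀ (y : lp X 2) (δ : ℝ), 0 < δ →
      Dense {x : lp X 2 | ∃ p ∈ 𝒜, dist (aeval S p x) y < δ} := by
    intro y δ hδ
    rw [Metric.dense_iff]
    intro x r hr
    have h1 := Metric.tendsto_nhds.mp (tendsto_Jmap_trunc x) (r / 2) (by positivity)
    have h2 := Metric.tendsto_nhds.mp (tendsto_Jmap_trunc y) (δ / 2) (by positivity)
    obtain ⟨n, hn1, hxr, hyd⟩ : ∃ n : ℕ, 1 ≤ n ∧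
        dist (Jmap n (WithLp.toLp 2 (fun i : Fin n => x i))) x < r / 2 ∧
        dist (Jmap n (WithLp.toLp 2 (fun i : Fin n => y i))) y < δ / 2 := by
      rcases ((eventually_ge_atTop 1).and (h1.and h2)).exists with ⟨n, ha, hb, hc⟩
      exact ⟨n, ha, hb, hc⟩
    have hK : (0 : ℝ) < n := by exact_mod_cast hn1
    have hcyc := hfin n hn1 (finOp T n) (fun v i => rfl)
    obtain ⟨v, hv1, hv2⟩ := Metric.dense_iff.mp hcyc (WithLp.toLp 2 (fun i : Fin n => x i))
      (r / (2 * n)) (by positivity)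
    rw [mem_ball] at hv1
    obtain ⟨w, hw1, p, hp, hpw⟩ : ∃ w : PiLp 2 fun i : Fin n => X i, dist w (WithLp.toLp 2 (fun i : Fin n => y i)) < δ / (2 * n) ∧
        ∃ p ∈ 𝒜, aeval (finOp T n) p v = w := by
      rcases Metric.dense_iff.mp hv2 (WithLp.toLp 2 (fun i : Fin n => y i)) (δ / (2 * n)) (by positivity)
        with ⟨w, hw1, q, hq, hqw⟩
      exact ⟨w, mem_ball.mp hw1, q, hq, hqw⟩
    have harith : ∀ d e : ℝ, 0 < e → d < e / (2 * n) → (n : ℝ) * d < e / 2 := by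
      intro d e he hd
      have := mul_lt_mul_of_pos_left hd hK
      calc (n : ℝ) * d < n * (e / (2 * n)) := this
        _ = e / 2 := by field_simp
    refine ⟨Jmap n v, ?_, p, hp, ?_⟩
    · rw [mem_ball]
      calc dist (Jmap n v) x
          ≤ dist (Jmap n v) (Jmap n (WithLp.toLp 2 (fun i : Fin n => x i))) +
            dist (Jmap n (WithLp.toLp 2 (fun i : Fin n => x i))) x := dist_triangle _ _ _
        _ < r / 2 + r / 2 := by
            refine add_lt_add_of_le_of_lt ?_ hxr
            calc dist (Jmap n v) (Jmap n (WithLp.toLp 2 (fun i : Fin n => x i)))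
                ≤ n * dist v (WithLp.toLp 2 (fun i : Fin n => x i)) := Jmap_dist_le n _ _
              _ ≤ r / 2 := le_of_lt (harith _ _ hr hv1)
        _ = r := by ring
    · rw [hJae n p v, hpw]
      calc dist (Jmap n w) y
          ≤ dist (Jmap n w) (Jmap n (WithLp.toLp 2 (fun i : Fin n => y i))) +
            dist (Jmap n (WithLp.toLp 2 (fun i : Fin n => y i))) y := dist_triangle _ _ _
        _ < δ / 2 + δ / 2 := by
            refine add_lt_add_of_le_of_lt ?_ hyd
            calc dist (Jmap n w) (Jmap n (WithLp.toLp 2 (fun i : Fin n => y i)))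
                ≤ n * dist w (WithLp.toLp 2 (fun i : Fin n => y i)) := Jmap_dist_le n _ _
              _ ≤ δ / 2 := le_of_lt (harith _ _ hδ hw1)
        _ = δ := by ring
  -- Baire category argument
  obtain ⟨D, hDc, hDd⟩ := exists_countable_dense (lp X 2)
  haveI := hDc.to_subtype
  set O : D × ℕ → Set (lp X 2) := fun ym =>
    {x : lp X 2 | ∃ p ∈ 𝒜, dist (aeval S p x) (ym.1 : lp X 2) < 1 / (ym.2 + 1)} with hO
  have hOopen : ∀ ym, IsOpen (O ym) := by
    intro ym
    have : O ym = ⋃ p ∈ 𝒜,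
        (fun x => aeval S p x) ⁻¹' (ball (ym.1 : lp X 2) (1 / (ym.2 + 1))) := by
      ext x
      simp [hO, mem_ball]
    rw [this]
    exact isOpen_biUnion fun p _ => (isOpen_ball).preimage (aeval S p).continuous
  have hOdense : ∀ ym, Dense (O ym) := fun ym =>
    key (ym.1 : lp X 2) (1 / (ym.2 + 1)) (by positivity)
  have hInter := dense_iInter_of_isOpen hOopen hOdense
  refine hInter.mono ?_
  intro x hx
  simp only [Set.mem_iInter] at hx
  show Dense ((fun p : Polynomial 𝕜 => (Polynomial.aeval S p) x) '' 𝒜)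
  rw [Metric.dense_iff]
  intro z r hr
  obtain ⟨y, hyb, hyD⟩ := Metric.dense_iff.mp hDd z (r / 2) (by positivity)
  rw [mem_ball] at hyb
  obtain ⟨m, hm⟩ := exists_nat_one_div_lt (show (0 : ℝ) < r / 2 by positivity)
  obtain ⟨p, hp, hpd⟩ := hx (⟨⟨y, hyD⟩, m⟩ : D × ℕ)
  refine ⟨aeval S p x, mem_ball.mpr ?_, ⟨p, hp, rfl⟩⟩
  calc dist (aeval S p x) z ≤ dist (aeval S p x) y + dist y z := dist_triangle _ _ _
    _ < r / 2 + r / 2 := add_lt_add (lt_trans hpd (by exact_mod_cast hm)) hyb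
    _ = r := by ring
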